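/- Let β > 0, let m ≥ 1 and d ≥ 3 be integers, set S = {0,1,…,m} and S′ = {m+d,…,2m+d}, and let A ⊆ S and B ⊆ S′. Suppose Σ_{x ∈ S∖A, y ∈ S′} (y−x)^{−2} ≤ ε₁ and Σ_{x ∈ S, y ∈ S′∖B} (y−x)^{−2} ≤ ε₂ for some ε₁, ε₂ ≥ 0. Then ∏_{x ∈ A, y ∈ B} exp( −β/(y−x)² ) ≤ e^{β(ε₁+ε₂)} · ( d(2m+d) / (m+d)² )^{β(1−2/d)²}. Consequently, under the product measure ν = ν_{p,β}, the probability that all edges {x,y} with x ∈ A and y ∈ B are closed admits the same upper bound. -/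

import Mathlib

open MeasureTheory ProbabilityTheory

section PedestalHelpers

lemma IccZ_succ (a b : ℤ) (h : a ≤ b + 1) :
    Finset.Icc a (b + 1) = insert (b + 1) (Finset.Icc a b) := by
  ext x; simp only [Finset.mem_Icc, Finset.mem_insert]; omega

lemma telZ (g : ℤ → ℝ) (a : ℤ) : ∀ b : ℤ, a - 1 ≤ b →
    ∑ j ∈ Finset.Icc a b, (g j - g (j + 1)) = g a - g (b + 1) := by
  refine Int.le_induction ?_ ?_
  · rw [Finset.Icc_eq_empty (by omega), Finset.sum_empty,
      show a - 1 + 1 = a by ring, sub_self]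
  · intro n hn ih
    rw [IccZ_succ a n (by omega), Finset.sum_insert (by simp), ih]
    ring

lemma inv_sq_ge (c : ℝ) (hc : 0 < c) : c⁻¹ - (c + 1)⁻¹ ≤ (c ^ 2)⁻¹ := by
  have h1 : c⁻¹ - (c + 1)⁻¹ = (c * (c + 1))⁻¹ := by
    field_simp; ring
  rw [h1]
  apply inv_anti₀ (by positivity)
  nlinarith

lemma log_succ_le (c : ℝ) (hc : 0 < c) : Real.log (c + 1) - Real.log c ≤ c⁻¹ := by
  have h := Real.log_le_sub_one_of_pos (x := (c + 1) / c) (by positivity)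
  rw [Real.log_div (by positivity) (ne_of_gt hc)] at h
  have h2 : (c + 1) / c - 1 = c⁻¹ := by field_simp; ring
  linarith

lemma inv_le_log_sub (c : ℝ) (hc : 1 < c) : c⁻¹ ≤ Real.log c - Real.log (c - 1) := by
  have h := Real.log_le_sub_one_of_pos (x := (c - 1) / c) (by apply div_pos <;> linarith)
  rw [Real.log_div (by linarith) (by linarith)] at h
  have h2 : (c - 1) / c - 1 = -c⁻¹ := by field_simp; ring
  linarith

lemma key_sum_lb (m d : ℕ) (hm : 1 ≤ m) (hd : 3 ≤ d) :
    Real.log (((m : ℝ) + (d : ℝ)) ^ 2 / ((d : ℝ) * (2 * (m : ℝ) + (d : ℝ)))) ≤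
      ∑ x ∈ Finset.Icc (0 : ℤ) (m : ℤ),
        ∑ y ∈ Finset.Icc ((m : ℤ) + (d : ℤ)) (2 * (m : ℤ) + (d : ℤ)),
          (((y - x : ℤ) : ℝ) ^ 2)⁻¹ := by
  have hM : (1:ℝ) ≤ (m:ℝ) := by exact_mod_cast hm
  have hD : (3:ℝ) ≤ (d:ℝ) := by exact_mod_cast hd
  -- Step A : inner sum lower bound by telescoping 1/k² ≥ 1/k - 1/(k+1)
  have stepA : ∀ x ∈ Finset.Icc (0 : ℤ) (m : ℤ),
      ((m:ℝ) + d - (x:ℝ))⁻¹ - (2*(m:ℝ) + d + 1 - (x:ℝ))⁻¹ ≤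
        ∑ y ∈ Finset.Icc ((m : ℤ) + (d : ℤ)) (2 * (m : ℤ) + (d : ℤ)),
          (((y - x : ℤ) : ℝ) ^ 2)⁻¹ := by
    intro x hx
    rw [Finset.mem_Icc] at hx
    have tel := telZ (fun j : ℤ => ((j:ℝ) - (x:ℝ))⁻¹) ((m : ℤ) + (d:ℤ))
      (2 * (m:ℤ) + (d:ℤ)) (by omega)
    have hsum : ∑ y ∈ Finset.Icc ((m : ℤ) + (d : ℤ)) (2 * (m : ℤ) + (d : ℤ)),
        (((y:ℝ) - (x:ℝ))⁻¹ - (((y + 1 : ℤ):ℝ) - (x:ℝ))⁻¹) ≤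
        ∑ y ∈ Finset.Icc ((m : ℤ) + (d : ℤ)) (2 * (m : ℤ) + (d : ℤ)),
          (((y - x : ℤ) : ℝ) ^ 2)⁻¹ := by
      apply Finset.sum_le_sum
      intro y hy
      rw [Finset.mem_Icc] at hy
      have hc : (0:ℝ) < (y:ℝ) - (x:ℝ) := by
        have h' : (x:ℝ) < (y:ℝ) := by exact_mod_cast (by omega : x < y)
        linarith
      have h2 := inv_sq_ge _ hc
      have e1 : (((y + 1 : ℤ):ℝ) - (x:ℝ))⁻¹ = (((y:ℝ) - (x:ℝ)) + 1)⁻¹ := by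
        congr 1; push_cast; ring
      have e2 : (((y - x : ℤ) : ℝ) ^ 2)⁻¹ = (((y:ℝ) - (x:ℝ)) ^ 2)⁻¹ := by
        congr 1; push_cast; ring
      rw [e1, e2]; exact h2
    rw [tel] at hsum
    have e3 : (((m:ℤ) + (d:ℤ) : ℤ):ℝ) - (x:ℝ) = (m:ℝ) + d - (x:ℝ) := by push_cast; ring
    have e4 : ((2 * (m:ℤ) + (d:ℤ) + 1 : ℤ):ℝ) - (x:ℝ) = 2*(m:ℝ) + d + 1 - (x:ℝ) := by
      push_cast; ring
    rw [e3, e4] at hsum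
    exact hsum
  -- outer telescoping for the two harmonic-type sums
  have stepB1 : Real.log ((m:ℝ) + d + 1) - Real.log (d:ℝ) ≤
      ∑ x ∈ Finset.Icc (0 : ℤ) (m : ℤ), ((m:ℝ) + d - (x:ℝ))⁻¹ := by
    have tel := telZ (fun j : ℤ => Real.log ((m:ℝ) + d + 1 - (j:ℝ))) 0 (m:ℤ) (by omega)
    have hsum : ∑ x ∈ Finset.Icc (0 : ℤ) (m : ℤ),
        (Real.log ((m:ℝ) + d + 1 - (x:ℝ)) - Real.log ((m:ℝ) + d + 1 - ((x + 1 : ℤ):ℝ))) ≤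
        ∑ x ∈ Finset.Icc (0 : ℤ) (m : ℤ), ((m:ℝ) + d - (x:ℝ))⁻¹ := by
      apply Finset.sum_le_sum
      intro x hx
      rw [Finset.mem_Icc] at hx
      have hxle : (x:ℝ) ≤ (m:ℝ) := by exact_mod_cast hx.2
      have hc : (0:ℝ) < (m:ℝ) + d - (x:ℝ) := by linarith
      have h2 := log_succ_le _ hc
      have e1 : Real.log ((m:ℝ) + d + 1 - ((x + 1 : ℤ):ℝ)) = Real.log ((m:ℝ) + d - (x:ℝ)) := by
        congr 1; push_cast; ring
      have e2 : Real.log ((m:ℝ) + d + 1 - (x:ℝ)) = Real.log (((m:ℝ) + d - (x:ℝ)) + 1) := by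
        congr 1; ring
      rw [e1, e2]; exact h2
    rw [tel] at hsum
    have e3 : Real.log ((m:ℝ) + d + 1 - ((0:ℤ):ℝ)) = Real.log ((m:ℝ) + d + 1) := by norm_num
    have e4 : Real.log ((m:ℝ) + d + 1 - (((m:ℤ) + 1 : ℤ):ℝ)) = Real.log (d:ℝ) := by
      congr 1; push_cast; ring
    rw [e3, e4] at hsum
    exact hsum
  have stepB2 : ∑ x ∈ Finset.Icc (0 : ℤ) (m : ℤ), (2*(m:ℝ) + d + 1 - (x:ℝ))⁻¹ ≤
      Real.log (2*(m:ℝ) + d + 1) - Real.log ((m:ℝ) + d) := by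
    have tel := telZ (fun j : ℤ => Real.log (2*(m:ℝ) + d + 1 - (j:ℝ))) 0 (m:ℤ) (by omega)
    have hsum : ∑ x ∈ Finset.Icc (0 : ℤ) (m : ℤ), (2*(m:ℝ) + d + 1 - (x:ℝ))⁻¹ ≤
        ∑ x ∈ Finset.Icc (0 : ℤ) (m : ℤ),
        (Real.log (2*(m:ℝ) + d + 1 - (x:ℝ)) - Real.log (2*(m:ℝ) + d + 1 - ((x + 1 : ℤ):ℝ))) := by
      apply Finset.sum_le_sum
      intro x hx
      rw [Finset.mem_Icc] at hx
      have hxle : (x:ℝ) ≤ (m:ℝ) := by exact_mod_cast hx.2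
      have hc : (1:ℝ) < 2*(m:ℝ) + d + 1 - (x:ℝ) := by linarith
      have h2 := inv_le_log_sub _ hc
      have e1 : Real.log (2*(m:ℝ) + d + 1 - ((x + 1 : ℤ):ℝ)) =
          Real.log ((2*(m:ℝ) + d + 1 - (x:ℝ)) - 1) := by
        congr 1; push_cast; ring
      rw [e1]; exact h2
    rw [tel] at hsum
    have e3 : Real.log (2*(m:ℝ) + d + 1 - ((0:ℤ):ℝ)) = Real.log (2*(m:ℝ) + d + 1) := by
      norm_num
    have e4 : Real.log (2*(m:ℝ) + d + 1 - (((m:ℤ) + 1 : ℤ):ℝ)) = Real.log ((m:ℝ) + d) := by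
      congr 1; push_cast; ring
    rw [e3, e4] at hsum
    exact hsum
  -- combine
  have hsum2 : ∑ x ∈ Finset.Icc (0 : ℤ) (m : ℤ),
      (((m:ℝ) + d - (x:ℝ))⁻¹ - (2*(m:ℝ) + d + 1 - (x:ℝ))⁻¹) ≤
      ∑ x ∈ Finset.Icc (0 : ℤ) (m : ℤ),
        ∑ y ∈ Finset.Icc ((m : ℤ) + (d : ℤ)) (2 * (m : ℤ) + (d : ℤ)),
          (((y - x : ℤ) : ℝ) ^ 2)⁻¹ := Finset.sum_le_sum stepA
  rw [Finset.sum_sub_distrib] at hsum2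
  -- log comparison
  have hlog : Real.log (((m:ℝ) + d) * (2*(m:ℝ) + d + 1)) ≤
      Real.log (((m:ℝ) + d + 1) * (2*(m:ℝ) + d)) := by
    apply Real.log_le_log (by nlinarith)
    nlinarith
  rw [Real.log_mul (by nlinarith) (by nlinarith), Real.log_mul (by nlinarith) (by nlinarith)]
    at hlog
  have hL : Real.log (((m : ℝ) + (d : ℝ)) ^ 2 / ((d : ℝ) * (2 * (m : ℝ) + (d : ℝ)))) =
      2 * Real.log ((m:ℝ) + d) - (Real.log (d:ℝ) + Real.log (2*(m:ℝ) + d)) := by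
    rw [Real.log_div (by nlinarith) (by nlinarith), Real.log_mul (by nlinarith) (by nlinarith),
      Real.log_pow]
    push_cast; ring
  rw [hL]
  linarith

end PedestalHelpers

/-- Edge occupation probability: `p` for nearest neighbours, `1 - exp(-β/|x-y|²)` otherwise. -/
noncomputable def edgeProb (p β : ℝ) (x y : ℤ) : ℝ :=
  if (x - y).natAbs = 1 then p else 1 - Real.exp (-β / ((x - y : ℤ) : ℝ) ^ 2)

/-- `ν` is the Bernoulli product measure `ν_{p,β}`. -/
def IsBernoulliEdgeMeasure (p β : ℝ) (ν : Measure (Sym2 ℤ → Bool)) : Prop :=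
  iIndepFun (fun e ω => ω e) ν ∧
    ∀ x y : ℤ, x ≠ y → ν {ω | ω s(x, y) = true} = ENNReal.ofReal (edgeProb p β x y)

set_option maxHeartbeats 1000000 in
/-- Pedestal version of the closed-edge estimate: with `S = {0,…,m}`, `S' = {m+d,…,2m+d}`,
`d ≥ 3`, `A ⊆ S`, `B ⊆ S'` such that the removed sums are at most `ε₁`, `ε₂`, the probability
that all edges between `A` and `B` are closed is at most
`e^{β(ε₁+ε₂)} (d(2m+d)/(m+d)²)^{β(1-2/d)²}`. -/
theorem pedestal_closed_edges_estimate (β p : ℝ) (hβ : 0 < β) (hp0 : 0 < p) (hp1 : p < 1)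
    (m d : ℕ) (hm : 1 ≤ m) (hd : 3 ≤ d)
    (A B : Finset ℤ)
    (hA : A ⊆ Finset.Icc (0 : ℤ) (m : ℤ))
    (hB : B ⊆ Finset.Icc ((m : ℤ) + (d : ℤ)) (2 * (m : ℤ) + (d : ℤ)))
    (ε₁ ε₂ : ℝ) (hε₁ : 0 ≤ ε₁) (hε₂ : 0 ≤ ε₂)
    (h₁ : (∑ x ∈ Finset.Icc (0 : ℤ) (m : ℤ) \ A,
        ∑ y ∈ Finset.Icc ((m : ℤ) + (d : ℤ)) (2 * (m : ℤ) + (d : ℤ)),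
          (((y - x : ℤ) : ℝ) ^ 2)⁻¹) ≤ ε₁)
    (h₂ : (∑ x ∈ Finset.Icc (0 : ℤ) (m : ℤ),
        ∑ y ∈ Finset.Icc ((m : ℤ) + (d : ℤ)) (2 * (m : ℤ) + (d : ℤ)) \ B,
          (((y - x : ℤ) : ℝ) ^ 2)⁻¹) ≤ ε₂)
    (ν : Measure (Sym2 ℤ → Bool)) [IsProbabilityMeasure ν]
    (hν : IsBernoulliEdgeMeasure p β ν) :
    (∏ x ∈ A, ∏ y ∈ B, Real.exp (-β / ((y - x : ℤ) : ℝ) ^ 2)) ≤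
      Real.exp (β * (ε₁ + ε₂)) *
        ((d : ℝ) * (2 * (m : ℝ) + (d : ℝ)) / ((m : ℝ) + (d : ℝ)) ^ 2) ^
          (β * (1 - 2 / (d : ℝ)) ^ 2) ∧
    ν {ω | ∀ x ∈ A, ∀ y ∈ B, ω s(x, y) = false} ≤
      ENNReal.ofReal
        (Real.exp (β * (ε₁ + ε₂)) *
          ((d : ℝ) * (2 * (m : ℝ) + (d : ℝ)) / ((m : ℝ) + (d : ℝ)) ^ 2) ^
            (β * (1 - 2 / (d : ℝ)) ^ 2)) := by
  have hM : (1:ℝ) ≤ (m:ℝ) := by exact_mod_cast hm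
  have hD : (3:ℝ) ≤ (d:ℝ) := by exact_mod_cast hd
  have hbasepos : 0 < (d : ℝ) * (2 * (m : ℝ) + (d : ℝ)) / ((m : ℝ) + (d : ℝ)) ^ 2 := by
    apply div_pos (by nlinarith) (by nlinarith)
  have hT := key_sum_lb m d hm hd
  -- lower bound on the A×B sum
  have hAB : Real.log (((m : ℝ) + (d : ℝ)) ^ 2 / ((d : ℝ) * (2 * (m : ℝ) + (d : ℝ)))) - ε₁ - ε₂ ≤ ∑ x ∈ A, ∑ y ∈ B, (((y - x : ℤ) : ℝ) ^ 2)⁻¹ := by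
    have hsdA := Finset.sum_sdiff (f := fun x =>
      ∑ y ∈ Finset.Icc ((m:ℤ)+(d:ℤ)) (2*(m:ℤ)+(d:ℤ)), (((y - x : ℤ) : ℝ) ^ 2)⁻¹) hA
    have h4 : ∑ x ∈ A, ∑ y ∈ Finset.Icc ((m:ℤ)+(d:ℤ)) (2*(m:ℤ)+(d:ℤ)),
          (((y - x : ℤ) : ℝ) ^ 2)⁻¹ =
        ∑ x ∈ A, ∑ y ∈ Finset.Icc ((m:ℤ)+(d:ℤ)) (2*(m:ℤ)+(d:ℤ)) \ B,
          (((y - x : ℤ) : ℝ) ^ 2)⁻¹ +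
        ∑ x ∈ A, ∑ y ∈ B, (((y - x : ℤ) : ℝ) ^ 2)⁻¹ := by
      rw [← Finset.sum_add_distrib]
      exact Finset.sum_congr rfl fun x _ => (Finset.sum_sdiff hB).symm
    have h3 : ∑ x ∈ A, ∑ y ∈ Finset.Icc ((m:ℤ)+(d:ℤ)) (2*(m:ℤ)+(d:ℤ)) \ B,
          (((y - x : ℤ) : ℝ) ^ 2)⁻¹ ≤
        ∑ x ∈ Finset.Icc (0:ℤ) (m:ℤ), ∑ y ∈ Finset.Icc ((m:ℤ)+(d:ℤ)) (2*(m:ℤ)+(d:ℤ)) \ B,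
          (((y - x : ℤ) : ℝ) ^ 2)⁻¹ := by
      apply Finset.sum_le_sum_of_subset_of_nonneg hA
      intro x _ _
      exact Finset.sum_nonneg fun y _ => by positivity
    linarith [hT, hsdA, h4, h3, h₁, h₂]
  have hLnonneg :
      0 ≤ Real.log (((m : ℝ) + (d : ℝ)) ^ 2 / ((d : ℝ) * (2 * (m : ℝ) + (d : ℝ)))) := by
    apply Real.log_nonneg
    rw [le_div_iff₀ (by nlinarith)]
    nlinarith
  have hlogbase : Real.log ((d : ℝ) * (2 * (m : ℝ) + (d : ℝ)) / ((m : ℝ) + (d : ℝ)) ^ 2) =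
      -Real.log (((m : ℝ) + (d : ℝ)) ^ 2 / ((d : ℝ) * (2 * (m : ℝ) + (d : ℝ)))) := by
    rw [Real.log_div (by nlinarith) (by nlinarith),
      Real.log_div (by nlinarith) (by nlinarith)]
    ring
  have hθ1 : (1 - 2 / (d:ℝ)) ^ 2 ≤ 1 := by
    have h1 : (0:ℝ) < d := by linarith
    have h2 : 2 / (d:ℝ) ≤ 1 := by rw [div_le_one h1]; linarith
    have h3 : (0:ℝ) < 2 / (d:ℝ) := by positivity
    nlinarith
  -- Part 1
  have part1 : (∏ x ∈ A, ∏ y ∈ B, Real.exp (-β / ((y - x : ℤ) : ℝ) ^ 2)) ≤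
      Real.exp (β * (ε₁ + ε₂)) *
        ((d : ℝ) * (2 * (m : ℝ) + (d : ℝ)) / ((m : ℝ) + (d : ℝ)) ^ 2) ^
          (β * (1 - 2 / (d : ℝ)) ^ 2) := by
    have hprodeq : (∏ x ∈ A, ∏ y ∈ B, Real.exp (-β / ((y - x : ℤ) : ℝ) ^ 2)) =
        Real.exp (-β * ∑ x ∈ A, ∑ y ∈ B, (((y - x : ℤ) : ℝ) ^ 2)⁻¹) := by
      rw [show (-β * ∑ x ∈ A, ∑ y ∈ B, (((y - x : ℤ) : ℝ) ^ 2)⁻¹) =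
          ∑ x ∈ A, ∑ y ∈ B, (-β / ((y - x : ℤ) : ℝ) ^ 2) by
        rw [Finset.mul_sum]
        refine Finset.sum_congr rfl fun x _ => ?_
        rw [Finset.mul_sum]
        refine Finset.sum_congr rfl fun y _ => ?_
        rw [div_eq_mul_inv]]
      rw [Real.exp_sum]
      exact Finset.prod_congr rfl fun x _ => (Real.exp_sum _ _).symm
    rw [hprodeq, Real.rpow_def_of_pos hbasepos, ← Real.exp_add, Real.exp_le_exp, hlogbase]
    clear hprodeq hT h₁ h₂ hA hB hbasepos hlogbase
    revert hAB hLnonneg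
    generalize (∑ x ∈ A, ∑ y ∈ B, (((y - x : ℤ) : ℝ) ^ 2)⁻¹) = sAB
    generalize (Real.log (((m : ℝ) + (d : ℝ)) ^ 2 / ((d : ℝ) * (2 * (m : ℝ) + (d : ℝ))))) = Lv
    intro hAB hLnonneg
    nlinarith [mul_le_mul_of_nonneg_left hAB hβ.le,
      mul_le_mul_of_nonneg_right (mul_le_mul_of_nonneg_left hθ1 hβ.le) hLnonneg]
  refine ⟨part1, ?_⟩
  -- Part 2
  obtain ⟨hind, hmarg⟩ := hν
  set E : Finset (Sym2 ℤ) := (A ×ˢ B).image (fun p => s(p.1, p.2)) with hE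
  have heq : {ω : Sym2 ℤ → Bool | ∀ x ∈ A, ∀ y ∈ B, ω s(x, y) = false} =
      ⋂ e ∈ E, {ω : Sym2 ℤ → Bool | ω e = false} := by
    ext ω
    simp only [Set.mem_setOf_eq, Set.mem_iInter, hE, Finset.mem_coe, Finset.mem_image,
      Finset.mem_product, Prod.exists]
    constructor
    · rintro h e ⟨x, y, ⟨hx, hy⟩, rfl⟩
      exact h x hx y hy
    · intro h x hx y hy
      exact h s(x, y) ⟨x, y, ⟨hx, hy⟩, rfl⟩
  have hmeasint := hind.meas_biInter (S := E) (s := fun e => {ω | ω e = false})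
    (fun e _ => ⟨{false}, trivial, by ext ω; simp⟩)
  rw [heq, hmeasint]
  have hfac : ∀ x ∈ A, ∀ y ∈ B, ν {ω : Sym2 ℤ → Bool | ω s(x, y) = false} =
      ENNReal.ofReal (Real.exp (-β / ((y - x : ℤ) : ℝ) ^ 2)) := by
    intro x hx y hy
    have b1 := Finset.mem_Icc.mp (hA hx)
    have b2 := Finset.mem_Icc.mp (hB hy)
    have hco : {ω : Sym2 ℤ → Bool | ω s(x, y) = false} = {ω | ω s(x, y) = true}ᶜ := by
      ext ω; simp
    have hms' : MeasurableSet ((fun ω : Sym2 ℤ → Bool => ω s(x, y)) ⁻¹' {true}) :=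
      measurable_pi_apply s(x, y) (measurableSet_singleton true)
    have hms : MeasurableSet {ω : Sym2 ℤ → Bool | ω s(x, y) = true} := hms' 
    rw [hco, prob_compl_eq_one_sub hms, hmarg x y (by omega)]
    have hna : (x - y).natAbs ≠ 1 := by omega
    rw [edgeProb, if_neg hna]
    have hsq : ((x - y : ℤ) : ℝ) ^ 2 = ((y - x : ℤ) : ℝ) ^ 2 := by push_cast; ring
    rw [hsq]
    set t := Real.exp (-β / ((y - x : ℤ) : ℝ) ^ 2) with ht
    have ht0 : 0 ≤ t := (Real.exp_pos _).le
    have ht1 : t ≤ 1 := by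
      rw [ht, Real.exp_le_one_iff]
      have hc2 : (0:ℝ) < ((y - x : ℤ) : ℝ) ^ 2 := by
        have hne : ((y - x : ℤ) : ℝ) ≠ 0 := by
          exact_mod_cast (by omega : (y - x : ℤ) ≠ 0)
        positivity
      exact div_nonpos_of_nonpos_of_nonneg (by linarith) hc2.le
    apply ENNReal.sub_eq_of_eq_add ENNReal.ofReal_ne_top
    rw [← ENNReal.ofReal_add ht0 (by linarith), show t + (1 - t) = 1 by ring,
      ENNReal.ofReal_one]
  have hinj : ∀ p ∈ A ×ˢ B, ∀ q ∈ A ×ˢ B,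
      (fun p : ℤ × ℤ => s(p.1, p.2)) p = (fun p : ℤ × ℤ => s(p.1, p.2)) q → p = q := by
    rintro ⟨x₁, y₁⟩ hp ⟨x₂, y₂⟩ hq h
    simp only [Finset.mem_product] at hp hq
    have b1 := Finset.mem_Icc.mp (hA hp.1)
    have b2 := Finset.mem_Icc.mp (hB hp.2)
    have b3 := Finset.mem_Icc.mp (hA hq.1)
    have b4 := Finset.mem_Icc.mp (hB hq.2)
    simp only [Sym2.eq, Sym2.rel_iff', Prod.mk.injEq, Prod.swap_prod_mk] at h
    rcases h with ⟨h1, h2⟩ | ⟨h1, h2⟩ <;> simp only [Prod.mk.injEq] <;> omega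
  beta_reduce
  rw [hE, Finset.prod_image hinj,
    Finset.prod_product' (f := fun x y => ν {ω : Sym2 ℤ → Bool | ω s(x, y) = false})]
  calc ∏ x ∈ A, ∏ y ∈ B, ν {ω : Sym2 ℤ → Bool | ω s(x, y) = false}
      = ∏ x ∈ A, ∏ y ∈ B, ENNReal.ofReal (Real.exp (-β / ((y - x : ℤ) : ℝ) ^ 2)) :=
        Finset.prod_congr rfl fun x hx => Finset.prod_congr rfl fun y hy => hfac x hx y hy
    _ = ENNReal.ofReal (∏ x ∈ A, ∏ y ∈ B, Real.exp (-β / ((y - x : ℤ) : ℝ) ^ 2)) := by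
        rw [ENNReal.ofReal_prod_of_nonneg
          (fun x _ => Finset.prod_nonneg fun y _ => (Real.exp_pos _).le)]
        exact Finset.prod_congr rfl fun x _ =>
          (ENNReal.ofReal_prod_of_nonneg fun y _ => (Real.exp_pos _).le).symm
    _ ≤ _ := ENNReal.ofReal_le_ofReal part1
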